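/- There exists a function Ñ assigning to each finite sequence (N_1,…,N_{k−1}) of positive integers a positive integer, such that whenever the parameter sequence satisfies N_k ≥ Ñ(N_1,…,N_{k−1}) for every k ≥ 1, then for every k ≥ 1: if k is odd then f_0(a) > 100·f_0(b) for all a ∈ A_k and b ∈ B_k, and if k is even then f_0(b) > 100·f_0(a) for all a ∈ A_k and b ∈ B_k. -/
import Mathlib


open MeasureTheory Filter Topology
open scoped ENNReal Classical

noncomputable section

/-- The `m`-fold concatenation `u^m` of the word `u`. -/
def repW (u : List (Fin 3)) (m : ℕ) : List (Fin 3) := (List.replicate m u).flatten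

/-- The modified construction over the alphabet `{0,1,2}`:
`consAB3 N k = (ℓ_k, A_k, B_k)`, with `ℓ_0 = 2`, `A_0 = {00, 01}`, `B_0 = {00, 02}`;
for `k` odd, `A_k = {a^{1+2^{ℓ_{k-1}}+N_k} : a ∈ A_{k-1}}` and
`B_k = {b^{1+2^{ℓ_{k-1}}} 2^{N_k ℓ_{k-1}} : b ∈ B_{k-1}}`, and symmetrically
(with runs of `1`s) for `k` even; `ℓ_k = ℓ_{k-1}(1 + 2^{ℓ_{k-1}} + N_k)`. -/
def consAB3 (N : ℕ → ℕ) : ℕ → ℕ × Finset (List (Fin 3)) × Finset (List (Fin 3))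
  | 0 => (2, {[0, 0], [0, 1]}, {[0, 0], [0, 2]})
  | k + 1 =>
    let ℓ := (consAB3 N k).1
    let A := (consAB3 N k).2.1
    let B := (consAB3 N k).2.2
    let n := N (k + 1)
    if k % 2 = 0 then -- `k + 1` is odd
      (ℓ * (1 + 2 ^ ℓ + n),
        A.image fun a => repW a (1 + 2 ^ ℓ + n),
        B.image fun b => repW b (1 + 2 ^ ℓ) ++ List.replicate (n * ℓ) (2 : Fin 3))
    else -- `k + 1` is even
      (ℓ * (1 + 2 ^ ℓ + n),
        A.image fun a => repW a (1 + 2 ^ ℓ) ++ List.replicate (n * ℓ) (1 : Fin 3),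
        B.image fun b => repW b (1 + 2 ^ ℓ + n))

/-- The common length `ℓ_k` of the words of `A_k ∪ B_k`. -/
def ell3 (N : ℕ → ℕ) (k : ℕ) : ℕ := (consAB3 N k).1

/-- The set of words `A_k`. -/
def Ak3 (N : ℕ → ℕ) (k : ℕ) : Finset (List (Fin 3)) := (consAB3 N k).2.1

/-- The set of words `B_k`. -/
def Bk3 (N : ℕ → ℕ) (k : ℕ) : Finset (List (Fin 3)) := (consAB3 N k).2.2

/-- The frequency `f_0(u)` of the symbol `0` in the word `u`. -/
def freq03 (u : List (Fin 3)) : ℝ := (u.count 0 : ℝ) / u.length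

def cAx (N : ℕ → ℕ) : ℕ → ℕ
  | 0 => 1
  | k + 1 => if k % 2 = 0 then cAx N k * (1 + 2 ^ ell3 N k + N (k + 1))
             else cAx N k * (1 + 2 ^ ell3 N k)

def cBx (N : ℕ → ℕ) : ℕ → ℕ
  | 0 => 1
  | k + 1 => if k % 2 = 0 then cBx N k * (1 + 2 ^ ell3 N k)
             else cBx N k * (1 + 2 ^ ell3 N k + N (k + 1))

lemma repW_succ (u : List (Fin 3)) (m : ℕ) : repW u (m + 1) = u ++ repW u m := by
  simp [repW, List.replicate_succ]

lemma repW_length (u : List (Fin 3)) (m : ℕ) : (repW u m).length = m * u.length := by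
  induction m with
  | zero => simp [repW]
  | succ m ih => simp [repW_succ, ih]; ring

lemma repW_count (u : List (Fin 3)) (m : ℕ) : (repW u m).count 0 = m * u.count 0 := by
  induction m with
  | zero => simp [repW]
  | succ m ih => simp [repW_succ, ih]; ring

lemma cAx_pos (N : ℕ → ℕ) (k : ℕ) : 0 < cAx N k := by
  induction k with
  | zero => simp [cAx]
  | succ k ih => by_cases h : k % 2 = 0 <;> simp [cAx, h] <;> positivity

lemma cBx_pos (N : ℕ → ℕ) (k : ℕ) : 0 < cBx N k := by
  induction k with
  | zero => simp [cBx]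
  | succ k ih => by_cases h : k % 2 = 0 <;> simp [cBx, h] <;> positivity

lemma ell3_pos (N : ℕ → ℕ) (k : ℕ) : 0 < ell3 N k := by
  induction k with
  | zero => simp [ell3, consAB3]
  | succ k ih =>
    by_cases h : k % 2 = 0 <;> simp [ell3, consAB3, h] <;> positivity

lemma consAB3_succ_even (N : ℕ → ℕ) (k : ℕ) (hk : k % 2 = 0) :
    consAB3 N (k + 1) =
      (ell3 N k * (1 + 2 ^ ell3 N k + N (k + 1)),
        (Ak3 N k).image fun a => repW a (1 + 2 ^ ell3 N k + N (k + 1)),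
        (Bk3 N k).image fun b =>
          repW b (1 + 2 ^ ell3 N k) ++ List.replicate (N (k + 1) * ell3 N k) (2 : Fin 3)) := by
  simp [consAB3, hk, ell3, Ak3, Bk3]

lemma consAB3_succ_odd (N : ℕ → ℕ) (k : ℕ) (hk : ¬ k % 2 = 0) :
    consAB3 N (k + 1) =
      (ell3 N k * (1 + 2 ^ ell3 N k + N (k + 1)),
        (Ak3 N k).image fun a =>
          repW a (1 + 2 ^ ell3 N k) ++ List.replicate (N (k + 1) * ell3 N k) (1 : Fin 3),
        (Bk3 N k).image fun b => repW b (1 + 2 ^ ell3 N k + N (k + 1))) := by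
  simp [consAB3, hk, ell3, Ak3, Bk3]

lemma spec3 (N : ℕ → ℕ) (k : ℕ) :
    (∀ a ∈ Ak3 N k, a.length = ell3 N k ∧ cAx N k ≤ a.count 0 ∧ a.count 0 ≤ 2 * cAx N k) ∧
    (∀ b ∈ Bk3 N k, b.length = ell3 N k ∧ cBx N k ≤ b.count 0 ∧ b.count 0 ≤ 2 * cBx N k) := by
  induction k with
  | zero =>
    constructor
    · intro a ha
      simp [Ak3, consAB3] at ha
      rcases ha with rfl | rfl <;> simp [ell3, consAB3, cAx] <;> decide
    · intro b hb
      simp [Bk3, consAB3] at hb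
      rcases hb with rfl | rfl <;> simp [ell3, consAB3, cBx] <;> decide
  | succ k ih =>
    obtain ⟨ihA, ihB⟩ := ih
    by_cases hk : k % 2 = 0
    · constructor
      · intro a ha
        simp only [Ak3, consAB3_succ_even N k hk, Finset.mem_image] at ha
        obtain ⟨a0, ha0, rfl⟩ := ha
        obtain ⟨hl, h1, h2⟩ := ihA a0 ha0
        refine ⟨?_, ?_, ?_⟩
        · simp [repW_length, hl, ell3, consAB3_succ_even N k hk]; ring
        · simp [repW_count, cAx, hk]
          calc cAx N k * (1 + 2 ^ ell3 N k + N (k + 1))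
              = (1 + 2 ^ ell3 N k + N (k + 1)) * cAx N k := by ring
            _ ≤ (1 + 2 ^ ell3 N k + N (k + 1)) * a0.count 0 := by
                exact Nat.mul_le_mul_left _ h1
        · simp [repW_count, cAx, hk]
          calc (1 + 2 ^ ell3 N k + N (k + 1)) * a0.count 0
              ≤ (1 + 2 ^ ell3 N k + N (k + 1)) * (2 * cAx N k) := Nat.mul_le_mul_left _ h2
            _ = 2 * (cAx N k * (1 + 2 ^ ell3 N k + N (k + 1))) := by ring
      · intro b hb
        simp only [Bk3, consAB3_succ_even N k hk, Finset.mem_image] at hb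
        obtain ⟨b0, hb0, rfl⟩ := hb
        obtain ⟨hl, h1, h2⟩ := ihB b0 hb0
        have hc : (repW b0 (1 + 2 ^ ell3 N k) ++
            List.replicate (N (k + 1) * ell3 N k) (2 : Fin 3)).count 0
            = (1 + 2 ^ ell3 N k) * b0.count 0 := by
          simp [List.count_append, repW_count, List.count_replicate]
        refine ⟨?_, ?_, ?_⟩
        · simp [repW_length, hl, ell3, consAB3_succ_even N k hk]; ring
        · rw [hc]
          simp [cBx, hk]
          calc cBx N k * (1 + 2 ^ ell3 N k) = (1 + 2 ^ ell3 N k) * cBx N k := by ring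
            _ ≤ (1 + 2 ^ ell3 N k) * b0.count 0 := Nat.mul_le_mul_left _ h1
        · rw [hc]
          simp [cBx, hk]
          calc (1 + 2 ^ ell3 N k) * b0.count 0
              ≤ (1 + 2 ^ ell3 N k) * (2 * cBx N k) := Nat.mul_le_mul_left _ h2
            _ = 2 * (cBx N k * (1 + 2 ^ ell3 N k)) := by ring
    · constructor
      · intro a ha
        simp only [Ak3, consAB3_succ_odd N k hk, Finset.mem_image] at ha
        obtain ⟨a0, ha0, rfl⟩ := ha
        obtain ⟨hl, h1, h2⟩ := ihA a0 ha0
        have hc : (repW a0 (1 + 2 ^ ell3 N k) ++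
            List.replicate (N (k + 1) * ell3 N k) (1 : Fin 3)).count 0
            = (1 + 2 ^ ell3 N k) * a0.count 0 := by
          simp [List.count_append, repW_count, List.count_replicate]
        refine ⟨?_, ?_, ?_⟩
        · simp [repW_length, hl, ell3, consAB3_succ_odd N k hk]; ring
        · rw [hc]
          simp [cAx, hk]
          calc cAx N k * (1 + 2 ^ ell3 N k) = (1 + 2 ^ ell3 N k) * cAx N k := by ring
            _ ≤ (1 + 2 ^ ell3 N k) * a0.count 0 := Nat.mul_le_mul_left _ h1
        · rw [hc]
          simp [cAx, hk]
          calc (1 + 2 ^ ell3 N k) * a0.count 0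
              ≤ (1 + 2 ^ ell3 N k) * (2 * cAx N k) := Nat.mul_le_mul_left _ h2
            _ = 2 * (cAx N k * (1 + 2 ^ ell3 N k)) := by ring
      · intro b hb
        simp only [Bk3, consAB3_succ_odd N k hk, Finset.mem_image] at hb
        obtain ⟨b0, hb0, rfl⟩ := hb
        obtain ⟨hl, h1, h2⟩ := ihB b0 hb0
        refine ⟨?_, ?_, ?_⟩
        · simp [repW_length, hl, ell3, consAB3_succ_odd N k hk]; ring
        · simp [repW_count, cBx, hk]
          calc cBx N k * (1 + 2 ^ ell3 N k + N (k + 1))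
              = (1 + 2 ^ ell3 N k + N (k + 1)) * cBx N k := by ring
            _ ≤ (1 + 2 ^ ell3 N k + N (k + 1)) * b0.count 0 := Nat.mul_le_mul_left _ h1
        · simp [repW_count, cBx, hk]
          calc (1 + 2 ^ ell3 N k + N (k + 1)) * b0.count 0
              ≤ (1 + 2 ^ ell3 N k + N (k + 1)) * (2 * cBx N k) := Nat.mul_le_mul_left _ h2
            _ = 2 * (cBx N k * (1 + 2 ^ ell3 N k + N (k + 1))) := by ring

lemma consAB3_congr (N M : ℕ → ℕ) : ∀ k, (∀ i, 1 ≤ i → i ≤ k → N i = M i) →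
    consAB3 N k = consAB3 M k := by
  intro k
  induction k with
  | zero => intro _; rfl
  | succ k ih =>
    intro h
    have h1 : consAB3 N k = consAB3 M k := ih fun i hi hik => h i hi (by omega)
    have h2 : N (k + 1) = M (k + 1) := h (k + 1) (by omega) le_rfl
    simp only [consAB3, h1, h2]

lemma cAx_congr (N M : ℕ → ℕ) : ∀ k, (∀ i, 1 ≤ i → i ≤ k → N i = M i) →
    cAx N k = cAx M k := by
  intro k
  induction k with
  | zero => intro _; rfl
  | succ k ih =>
    intro h
    have h1 : cAx N k = cAx M k := ih fun i hi hik => h i hi (by omega)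
    have h2 : N (k + 1) = M (k + 1) := h (k + 1) (by omega) le_rfl
    have h3 : ell3 N k = ell3 M k := by
      unfold ell3; rw [consAB3_congr N M k fun i hi hik => h i hi (by omega)]
    simp only [cAx, h1, h2, h3]

lemma cBx_congr (N M : ℕ → ℕ) : ∀ k, (∀ i, 1 ≤ i → i ≤ k → N i = M i) →
    cBx N k = cBx M k := by
  intro k
  induction k with
  | zero => intro _; rfl
  | succ k ih =>
    intro h
    have h1 : cBx N k = cBx M k := ih fun i hi hik => h i hi (by omega)
    have h2 : N (k + 1) = M (k + 1) := h (k + 1) (by omega) le_rfl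
    have h3 : ell3 N k = ell3 M k := by
      unfold ell3; rw [consAB3_congr N M k fun i hi hik => h i hi (by omega)]
    simp only [cBx, h1, h2, h3]

def NT0 (L : List ℕ) : ℕ :=
  let N : ℕ → ℕ := fun i => L.getD (i - 1) 1
  200 * (cAx N L.length + cBx N L.length) * (1 + 2 ^ ell3 N L.length) + 1

/-- There is a function `Ñ` of finite sequences `(N_1, …, N_{k-1})` such
that whenever `N_k ≥ Ñ(N_1, …, N_{k-1})` for all `k ≥ 1`, then for all `k ≥ 1`: if `k` is
odd then `f_0(a) > 100 f_0(b)` for all `a ∈ A_k`, `b ∈ B_k`, and if `k` is even then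
`f_0(b) > 100 f_0(a)` for all `a ∈ A_k`, `b ∈ B_k`. -/
theorem stmt16 :
    ∃ NT : List ℕ → ℕ, ∀ N : ℕ → ℕ, (∀ k, 0 < N k) →
      (∀ k : ℕ, NT ((List.range k).map fun i => N (i + 1)) ≤ N (k + 1)) →
      ∀ k : ℕ, 1 ≤ k →
        (Odd k → ∀ a ∈ Ak3 N k, ∀ b ∈ Bk3 N k, 100 * freq03 b < freq03 a) ∧
        (Even k → ∀ a ∈ Ak3 N k, ∀ b ∈ Bk3 N k, 100 * freq03 a < freq03 b) := by
  refine ⟨NT0, ?_⟩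
  intro N hpos hN k hk
  obtain ⟨j, rfl⟩ : ∃ j, k = j + 1 := ⟨k - 1, by omega⟩
  -- translate the growth hypothesis into a concrete bound
  set L : List ℕ := (List.range j).map fun i => N (i + 1) with hL
  have hLlen : L.length = j := by simp [hL]
  set M : ℕ → ℕ := fun i => L.getD (i - 1) 1 with hM
  have hagree : ∀ i, 1 ≤ i → i ≤ j → M i = N i := by
    intro i hi hij
    have hlt : i - 1 < L.length := by omega
    simp only [hM, List.getD_eq_getElem L 1 hlt]
    simp only [hL, List.getElem_map, List.getElem_range]
    congr 1
    omega
  have hn : 200 * (cAx N j + cBx N j) * (1 + 2 ^ ell3 N j) + 1 ≤ N (j + 1) := by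
    have := hN j
    rw [show ((List.range j).map fun i => N (i + 1)) = L from rfl] at this
    simp only [NT0] at this
    rw [hLlen, ← hM] at this
    rwa [cAx_congr M N j hagree, cBx_congr M N j hagree,
      show ell3 M j = ell3 N j from by
        unfold ell3; rw [consAB3_congr M N j hagree]] at this
  have hA := cAx_pos N j
  have hB := cBx_pos N j
  have hl' := ell3_pos N (j + 1)
  obtain ⟨specA, specB⟩ := spec3 N (j + 1)
  -- the key natural-number inequalities
  by_cases hj : j % 2 = 0
  · -- j + 1 is odd
    have hkey : 200 * cBx N (j + 1) < cAx N (j + 1) := by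
      simp only [cAx, cBx, if_pos hj]
      have h1 : 200 * cBx N j * (1 + 2 ^ ell3 N j) < N (j + 1) := by
        calc 200 * cBx N j * (1 + 2 ^ ell3 N j)
            < 200 * (cAx N j + cBx N j) * (1 + 2 ^ ell3 N j) + 1 := by
              have : 200 * cBx N j ≤ 200 * (cAx N j + cBx N j) := by omega
              have := Nat.mul_le_mul_right (1 + 2 ^ ell3 N j) this
              omega
          _ ≤ N (j + 1) := hn
      calc 200 * (cBx N j * (1 + 2 ^ ell3 N j)) = 200 * cBx N j * (1 + 2 ^ ell3 N j) := by ring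
        _ < N (j + 1) := h1
        _ ≤ 1 * (1 + 2 ^ ell3 N j + N (j + 1)) := by rw [one_mul]; exact Nat.le_add_left _ _
        _ ≤ cAx N j * (1 + 2 ^ ell3 N j + N (j + 1)) := Nat.mul_le_mul_right _ hA
    constructor
    · intro _ a ha b hb
      obtain ⟨hal, ha1, _⟩ := specA a ha
      obtain ⟨hbl, _, hb2⟩ := specB b hb
      have hnat : 100 * b.count 0 < a.count 0 := by omega
      unfold freq03
      rw [hal, hbl]
      have hlpos : (0 : ℝ) < (ell3 N (j + 1) : ℝ) := by exact_mod_cast hl'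
      rw [mul_div_assoc', div_lt_div_iff₀ hlpos hlpos]
      have : (100 * b.count 0 : ℝ) < (a.count 0 : ℝ) := by exact_mod_cast hnat
      nlinarith
    · intro he
      exfalso
      rw [Nat.even_iff] at he
      omega
  · -- j + 1 is even
    have hkey : 200 * cAx N (j + 1) < cBx N (j + 1) := by
      simp only [cAx, cBx, if_neg hj]
      have h1 : 200 * cAx N j * (1 + 2 ^ ell3 N j) < N (j + 1) := by
        calc 200 * cAx N j * (1 + 2 ^ ell3 N j)
            < 200 * (cAx N j + cBx N j) * (1 + 2 ^ ell3 N j) + 1 := by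
              have : 200 * cAx N j ≤ 200 * (cAx N j + cBx N j) := by omega
              have := Nat.mul_le_mul_right (1 + 2 ^ ell3 N j) this
              omega
          _ ≤ N (j + 1) := hn
      calc 200 * (cAx N j * (1 + 2 ^ ell3 N j)) = 200 * cAx N j * (1 + 2 ^ ell3 N j) := by ring
        _ < N (j + 1) := h1
        _ ≤ 1 * (1 + 2 ^ ell3 N j + N (j + 1)) := by rw [one_mul]; exact Nat.le_add_left _ _
        _ ≤ cBx N j * (1 + 2 ^ ell3 N j + N (j + 1)) := Nat.mul_le_mul_right _ hB
    constructor
    · intro ho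
      exfalso
      rw [Nat.odd_iff] at ho
      omega
    · intro _ a ha b hb
      obtain ⟨hal, _, ha2⟩ := specA a ha
      obtain ⟨hbl, hb1, _⟩ := specB b hb
      have hnat : 100 * a.count 0 < b.count 0 := by omega
      unfold freq03
      rw [hal, hbl]
      have hlpos : (0 : ℝ) < (ell3 N (j + 1) : ℝ) := by exact_mod_cast hl'
      rw [mul_div_assoc', div_lt_div_iff₀ hlpos hlpos]
      have : (100 * a.count 0 : ℝ) < (b.count 0 : ℝ) := by exact_mod_cast hnat
      nlinarith

end
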